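/- Let H ∈ ℂ^{N×M} and define h(R_s, R_v) := Tr(R_s − R_s Hᴴ (H R_s Hᴴ + R_v)⁻¹ H R_s) for Hermitian positive semidefinite R_s ∈ ℂ^{M×M} and R_v ∈ ℂ^{N×N} with H R_s Hᴴ + R_v positive definite. Then h is monotonically increasing in both arguments: (i) if R_{s,1} ⪰ R_{s,2} ⪰ 0 and both H R_{s,i} Hᴴ + R_v are positive definite, then h(R_{s,1}, R_v) ≥ h(R_{s,2}, R_v); (ii) if R_{v,1} ⪰ R_{v,2} and both H R_s Hᴴ + R_{v,i} are positive definite, then h(R_s, R_{v,1}) ≥ h(R_s, R_{v,2}). -/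

import Mathlib

open Matrix
open scoped ComplexOrder

/-- The Wiener MMSE `h(R_s, R_v) := Re Tr(R_s − R_s Hᴴ (H R_s Hᴴ + R_v)⁻¹ H R_s)`. -/
noncomputable def hMMSE {N M : ℕ} (H : Matrix (Fin N) (Fin M) ℂ)
    (Rs : Matrix (Fin M) (Fin M) ℂ) (Rv : Matrix (Fin N) (Fin N) ℂ) : ℝ :=
  ((Rs - Rs * Hᴴ * (H * Rs * Hᴴ + Rv)⁻¹ * H * Rs).trace).re

/-- Error covariance of the linear estimator `W` for the model `x = H s + v`. -/
noncomputable def Ecov {N M : ℕ} (H : Matrix (Fin N) (Fin M) ℂ)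
    (W : Matrix (Fin M) (Fin N) ℂ) (Rs : Matrix (Fin M) (Fin M) ℂ)
    (Rv : Matrix (Fin N) (Fin N) ℂ) : Matrix (Fin M) (Fin M) ℂ :=
  (1 - W * H) * Rs * (1 - W * H)ᴴ + W * Rv * Wᴴ

/-- Completion of the square for the error covariance. -/
lemma Ecov_decomp {N M : ℕ} (H : Matrix (Fin N) (Fin M) ℂ)
    {Rs : Matrix (Fin M) (Fin M) ℂ} {Rv : Matrix (Fin N) (Fin N) ℂ}
    (hRs : Rs.IsHermitian) (hRv : Rv.IsHermitian)
    (hA : (H * Rs * Hᴴ + Rv).PosDef) (W : Matrix (Fin M) (Fin N) ℂ) :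
    Ecov H W Rs Rv =
      (W - Rs * Hᴴ * (H * Rs * Hᴴ + Rv)⁻¹) * (H * Rs * Hᴴ + Rv) *
        (W - Rs * Hᴴ * (H * Rs * Hᴴ + Rv)⁻¹)ᴴ +
      (Rs - Rs * Hᴴ * (H * Rs * Hᴴ + Rv)⁻¹ * H * Rs) := by
  set A := H * Rs * Hᴴ + Rv with hAdef
  have hAh : Aᴴ = A := by
    simp [hAdef, conjTranspose_add, conjTranspose_mul, hRs.eq, hRv.eq, Matrix.mul_assoc]
  have hdet : IsUnit A.det := (Matrix.isUnit_iff_isUnit_det _).mp hA.isUnit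
  have hAinvh : (A⁻¹)ᴴ = A⁻¹ := hA.1.inv.eq
  simp only [Ecov, conjTranspose_sub, conjTranspose_mul, conjTranspose_one,
    conjTranspose_conjTranspose, hRs.eq, hRv.eq, hAinvh]
  simp only [sub_mul, mul_sub, one_mul, mul_one]
  simp only [Matrix.mul_assoc]
  simp only [Matrix.sub_mul, Matrix.mul_sub]
  simp only [Matrix.mul_assoc,
    Matrix.mul_nonsing_inv_cancel_left _ _ hdet,
    Matrix.nonsing_inv_mul_cancel_left _ _ hdet]
  rw [hAdef]
  simp only [Matrix.add_mul, Matrix.mul_add, Matrix.mul_assoc]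
  abel

lemma hMMSE_eq_Ecov {N M : ℕ} (H : Matrix (Fin N) (Fin M) ℂ)
    {Rs : Matrix (Fin M) (Fin M) ℂ} {Rv : Matrix (Fin N) (Fin N) ℂ}
    (hRs : Rs.IsHermitian) (hRv : Rv.IsHermitian)
    (hA : (H * Rs * Hᴴ + Rv).PosDef) :
    hMMSE H Rs Rv =
      ((Ecov H (Rs * Hᴴ * (H * Rs * Hᴴ + Rv)⁻¹) Rs Rv).trace).re := by
  rw [Ecov_decomp H hRs hRv hA (Rs * Hᴴ * (H * Rs * Hᴴ + Rv)⁻¹)]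
  simp [hMMSE, sub_self, Matrix.zero_mul]

lemma trace_re_nonneg {n : ℕ} {A : Matrix (Fin n) (Fin n) ℂ} (hA : A.PosSemidef) :
    0 ≤ A.trace.re := by
  have h : ∀ i, 0 ≤ A i i := fun i => hA.diag_nonneg
  have h2 : (0:ℂ) ≤ A.trace := Finset.sum_nonneg fun i _ => h i
  exact (Complex.le_def.mp h2).1

lemma trace_re_mono {n : ℕ} {X Y : Matrix (Fin n) (Fin n) ℂ}
    (h : (X - Y).PosSemidef) : Y.trace.re ≤ X.trace.re := by
  have := trace_re_nonneg h
  rw [Matrix.trace_sub, Complex.sub_re] at this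
  linarith

lemma Ecov_sub_Rs {N M : ℕ} (H : Matrix (Fin N) (Fin M) ℂ)
    (W : Matrix (Fin M) (Fin N) ℂ) (Rs₁ Rs₂ : Matrix (Fin M) (Fin M) ℂ)
    (Rv : Matrix (Fin N) (Fin N) ℂ) :
    Ecov H W Rs₁ Rv - Ecov H W Rs₂ Rv =
      (1 - W * H) * (Rs₁ - Rs₂) * (1 - W * H)ᴴ := by
  simp only [Ecov, Matrix.mul_sub, Matrix.sub_mul]
  abel

lemma Ecov_sub_Rv {N M : ℕ} (H : Matrix (Fin N) (Fin M) ℂ)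
    (W : Matrix (Fin M) (Fin N) ℂ) (Rs : Matrix (Fin M) (Fin M) ℂ)
    (Rv₁ Rv₂ : Matrix (Fin N) (Fin N) ℂ) :
    Ecov H W Rs Rv₁ - Ecov H W Rs Rv₂ = W * (Rv₁ - Rv₂) * Wᴴ := by
  simp only [Ecov, Matrix.mul_sub, Matrix.sub_mul]
  abel

/-- The optimal Wiener filter achieves the minimum: for any `W`,
the excess error covariance is PSD. -/
lemma Ecov_opt_le {N M : ℕ} (H : Matrix (Fin N) (Fin M) ℂ)
    {Rs : Matrix (Fin M) (Fin M) ℂ} {Rv : Matrix (Fin N) (Fin N) ℂ}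
    (hRs : Rs.IsHermitian) (hRv : Rv.IsHermitian)
    (hA : (H * Rs * Hᴴ + Rv).PosDef) (W : Matrix (Fin M) (Fin N) ℂ) :
    (Ecov H W Rs Rv -
      Ecov H (Rs * Hᴴ * (H * Rs * Hᴴ + Rv)⁻¹) Rs Rv).PosSemidef := by
  rw [Ecov_decomp H hRs hRv hA W,
    Ecov_decomp H hRs hRv hA (Rs * Hᴴ * (H * Rs * Hᴴ + Rv)⁻¹)]
  simp only [sub_self, Matrix.zero_mul, zero_add, add_sub_cancel_right]
  exact hA.posSemidef.mul_mul_conjTranspose_same _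

/-- The Wiener MMSE `h(R_s, R_v)` is monotonically increasing in both the transmit
covariance `R_s` and the noise covariance `R_v` (over Hermitian PSD matrices making the
relevant matrix `H R_s Hᴴ + R_v` positive definite). -/
theorem hMMSE_monotone {N M : ℕ} (H : Matrix (Fin N) (Fin M) ℂ) :
    (∀ (Rs₁ Rs₂ : Matrix (Fin M) (Fin M) ℂ) (Rv : Matrix (Fin N) (Fin N) ℂ),
        Rs₁.PosSemidef → Rs₂.PosSemidef → Rv.PosSemidef →
        (Rs₁ - Rs₂).PosSemidef →
        (H * Rs₁ * Hᴴ + Rv).PosDef → (H * Rs₂ * Hᴴ + Rv).PosDef →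
        hMMSE H Rs₂ Rv ≤ hMMSE H Rs₁ Rv)
    ∧ (∀ (Rs : Matrix (Fin M) (Fin M) ℂ) (Rv₁ Rv₂ : Matrix (Fin N) (Fin N) ℂ),
        Rs.PosSemidef → Rv₁.PosSemidef → Rv₂.PosSemidef →
        (Rv₁ - Rv₂).PosSemidef →
        (H * Rs * Hᴴ + Rv₁).PosDef → (H * Rs * Hᴴ + Rv₂).PosDef →
        hMMSE H Rs Rv₂ ≤ hMMSE H Rs Rv₁) := by
  constructor
  · intro Rs₁ Rs₂ Rv hRs₁ hRs₂ hRv hdiff hA₁ hA₂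
    set W₁ := Rs₁ * Hᴴ * (H * Rs₁ * Hᴴ + Rv)⁻¹ with hW₁
    rw [hMMSE_eq_Ecov H hRs₂.1 hRv.1 hA₂, hMMSE_eq_Ecov H hRs₁.1 hRv.1 hA₁]
    calc ((Ecov H (Rs₂ * Hᴴ * (H * Rs₂ * Hᴴ + Rv)⁻¹) Rs₂ Rv).trace).re
        ≤ ((Ecov H W₁ Rs₂ Rv).trace).re :=
          trace_re_mono (Ecov_opt_le H hRs₂.1 hRv.1 hA₂ W₁)
      _ ≤ ((Ecov H W₁ Rs₁ Rv).trace).re := by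
          refine trace_re_mono ?_
          rw [Ecov_sub_Rs]
          exact hdiff.mul_mul_conjTranspose_same _
  · intro Rs Rv₁ Rv₂ hRs hRv₁ hRv₂ hdiff hA₁ hA₂
    set W₁ := Rs * Hᴴ * (H * Rs * Hᴴ + Rv₁)⁻¹ with hW₁
    rw [hMMSE_eq_Ecov H hRs.1 hRv₂.1 hA₂, hMMSE_eq_Ecov H hRs.1 hRv₁.1 hA₁]
    calc ((Ecov H (Rs * Hᴴ * (H * Rs * Hᴴ + Rv₂)⁻¹) Rs Rv₂).trace).re
        ≤ ((Ecov H W₁ Rs Rv₂).trace).re :=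
          trace_re_mono (Ecov_opt_le H hRs.1 hRv₂.1 hA₂ W₁)
      _ ≤ ((Ecov H W₁ Rs Rv₁).trace).re := by
          refine trace_re_mono ?_
          rw [Ecov_sub_Rv]
          exact hdiff.mul_mul_conjTranspose_same _
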